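/- Let G be a group, π: G → U_k(ℂ) a faithful unitary representation of degree k, and (Γ,Ψ) a G-gain graph with underlying-graph adjacency matrix A⁺ ∈ M_n(ℂ). Then (Γ,Ψ) is balanced if and only if the spectrum (with multiplicities) of the represented adjacency matrix A_π ∈ M_{nk}(ℂ) consists of exactly k copies of the spectrum of A⁺. -/

import Mathlib

open scoped Kronecker
open Matrix Polynomial Filter

namespace GainPaper

variable {G : Type*} [Group G]

/-- The gain of a walk: product of the gains of its darts. -/
def walkGain {n : ℕ} {Γ : SimpleGraph (Fin n)} {M : Type*} [Monoid M]
    (Ψ : Fin n → Fin n → M) {u v : Fin n} (p : Γ.Walk u v) : M :=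
  (p.darts.map fun d => Ψ d.toProd.1 d.toProd.2).prod

/-- `Ψ` is a gain function on `Γ`: the gain of an edge in the reverse
orientation is the inverse of its gain. -/
def IsGain {n : ℕ} (Γ : SimpleGraph (Fin n)) (Ψ : Fin n → Fin n → G) : Prop :=
  ∀ i j, Γ.Adj i j → Ψ j i = (Ψ i j)⁻¹

/-- A gain graph is balanced if every closed walk has gain `1`. -/
def IsBalanced {n : ℕ} (Γ : SimpleGraph (Fin n)) {M : Type*} [Monoid M]
    (Ψ : Fin n → Fin n → M) : Prop :=
  ∀ (v : Fin n) (p : Γ.Walk v v), walkGain Ψ p = 1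

/-- The adjacency matrix of a gain graph, with entries in the group algebra ℂG. -/
noncomputable def gainAdj {n : ℕ} (Γ : SimpleGraph (Fin n)) [DecidableRel Γ.Adj]
    (Ψ : Fin n → Fin n → G) : Matrix (Fin n) (Fin n) (MonoidAlgebra ℂ G) :=
  Matrix.of fun i j => if Γ.Adj i j then MonoidAlgebra.single (Ψ i j) 1 else 0

/-- The involution on ℂG: `(Σ f_x x)* = Σ conj(f_x) x⁻¹`. -/
noncomputable def starCG (f : MonoidAlgebra ℂ G) : MonoidAlgebra ℂ G :=
  f.coeff.sum fun x c => MonoidAlgebra.single x⁻¹ (starRingEnd ℂ c)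

/-- The involution on M_n(ℂG): `(F*)_{i,j} = (F_{j,i})*`. -/
noncomputable def starM {n : ℕ} (F : Matrix (Fin n) (Fin n) (MonoidAlgebra ℂ G)) :
    Matrix (Fin n) (Fin n) (MonoidAlgebra ℂ G) :=
  Matrix.of fun i j => starCG (F j i)

/-- The trace on M_n(ℂG): sum over the diagonal of the coefficients of `1_G`. -/
noncomputable def trCG {n : ℕ} (F : Matrix (Fin n) (Fin n) (MonoidAlgebra ℂ G)) : ℂ :=
  ∑ i, (F i i).coeff 1

/-- The Fourier transform of `f ∈ ℂG` at `π`: `Σ_x f(x) π(x)`. -/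
noncomputable def fourier {m : Type*} (f : MonoidAlgebra ℂ G) (π : G → Matrix m m ℂ) :
    Matrix m m ℂ :=
  f.coeff.sum fun x c => c • π x

/-- The (finite) set of group elements appearing in some entry of `F`. -/
noncomputable def matSupport {n : ℕ} (F : Matrix (Fin n) (Fin n) (MonoidAlgebra ℂ G)) :
    Finset G :=
  letI := Classical.decEq G
  Finset.univ.biUnion fun i : Fin n => Finset.univ.biUnion fun j : Fin n => (F i j).coeff.support

/-- `F(x)`: the complex matrix of coefficients of `x` in the entries of `F`. -/
def matCoeff {n : ℕ} (F : Matrix (Fin n) (Fin n) (MonoidAlgebra ℂ G)) (x : G) :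
    Matrix (Fin n) (Fin n) ℂ :=
  Matrix.of fun i j => (F i j).coeff x

/-- Fourier transform of `F ∈ M_n(ℂG)` at `π`: `F̂(π) = Σ_{x∈G} F(x) ⊗ π(x)`. -/
noncomputable def fourierM {n : ℕ} {m : Type*} (F : Matrix (Fin n) (Fin n) (MonoidAlgebra ℂ G))
    (π : G → Matrix m m ℂ) : Matrix (Fin n × m) (Fin n × m) ℂ :=
  ∑ x ∈ matSupport F, matCoeff F x ⊗ₖ π x

/-- A representation is unitary if each `π g` is a unitary matrix. -/
def IsUnitaryRep {m : Type*} [Fintype m] [DecidableEq m] (π : G →* Matrix m m ℂ) : Prop :=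
  ∀ g, π g ∈ Matrix.unitaryGroup m ℂ

/-- Irreducibility: the space is nonzero and has no nontrivial invariant subspace. -/
def IsIrred {m : Type*} [Fintype m] [DecidableEq m] (π : G →* Matrix m m ℂ) : Prop :=
  Nonempty m ∧
    ∀ W : Submodule ℂ (m → ℂ), (∀ g, ∀ v ∈ W, (π g).mulVec v ∈ W) → W = ⊥ ∨ W = ⊤

/-- Equivalence of two matrix representations: an invertible intertwiner. -/
def RepEquiv {m m' : Type*} [Fintype m] [DecidableEq m] [Fintype m'] [DecidableEq m']
    (π : G →* Matrix m m ℂ) (π' : G →* Matrix m' m' ℂ) : Prop :=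
  ∃ e : (m → ℂ) ≃ₗ[ℂ] (m' → ℂ), ∀ g v, e ((π g).mulVec v) = (π' g).mulVec (e v)

/-- λ₁: the largest real root of the characteristic polynomial
(= the largest eigenvalue, for a Hermitian matrix). -/
noncomputable def lam1 {m : Type*} [Fintype m] [DecidableEq m] (M : Matrix m m ℂ) : ℝ :=
  sSup {x : ℝ | M.charpoly.IsRoot (x : ℂ)}

/-- Spectral radius: the sup of the absolute values of the eigenvalues. -/
noncomputable def specRad {m : Type*} [Fintype m] [DecidableEq m] (M : Matrix m m ℂ) : ℝ :=
  sSup {r : ℝ | ∃ μ : ℂ, M.charpoly.IsRoot μ ∧ r = ‖μ‖}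

/-- Adjacency relation of the cover graph on `V × G`:
`(u,g) ∼ (v,h)` iff `u ∼ v` and `h = Ψ(u,v)⁻¹ g`. -/
def coverAdj {n : ℕ} (Γ : SimpleGraph (Fin n)) (Ψ : Fin n → Fin n → G) (p q : Fin n × G) :
    Prop :=
  Γ.Adj p.1 q.1 ∧ q.2 = (Ψ p.1 q.1)⁻¹ * p.2

/-- The {0,1} adjacency matrix of the cover graph. -/
noncomputable def coverMatrix {n : ℕ} [DecidableEq G] (Γ : SimpleGraph (Fin n))
    [DecidableRel Γ.Adj] (Ψ : Fin n → Fin n → G) : Matrix (Fin n × G) (Fin n × G) ℂ :=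
  Matrix.of fun p q => if Γ.Adj p.1 q.1 ∧ q.2 = (Ψ p.1 q.1)⁻¹ * p.2 then 1 else 0

/-- The left regular representation, as matrices:
`λ_G(g)_{r,p} = 1` if `g = r p⁻¹`, else `0`. -/
noncomputable def lamG [DecidableEq G] : G → Matrix G G ℂ :=
  fun g => Matrix.of fun r p => if g = r * p⁻¹ then 1 else 0



section Helpers

open Matrix Polynomial

/-- Characteristic polynomial is invariant under conjugation. -/
lemma charpoly_conj {m R : Type*} [Fintype m] [DecidableEq m] [CommRing R]
    (D D' M : Matrix m m R) (h1 : D' * D = 1) :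
    (D' * M * D).charpoly = M.charpoly := by
  have key : charmatrix (D' * M * D) = D'.map C * charmatrix M * D.map C := by
    rw [charmatrix, charmatrix, mul_sub, sub_mul]
    congr 1
    · have hc : Commute (scalar m (X : R[X])) (D'.map C) :=
        (Matrix.scalar_commute _ (fun r => (Commute.all _ _)) _)
      calc scalar m (X : R[X])
          = scalar m X * (D'.map C * D.map C) := by
            rw [← Matrix.map_mul, h1, Matrix.map_one _ (map_zero C) (map_one C), mul_one]
        _ = D'.map C * scalar m X * D.map C := by rw [← mul_assoc, hc.eq]
    · show C.mapMatrix (D' * M * D) = _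
      rw [_root_.map_mul, _root_.map_mul]; rfl
  have hdet : (D'.map (C : R →+* R[X])).det * (D.map C).det = 1 := by
    rw [← det_mul, ← Matrix.map_mul, h1, Matrix.map_one _ (map_zero C) (map_one C), det_one]
  rw [Matrix.charpoly, Matrix.charpoly, key, det_mul, det_mul]
  ring_nf
  rw [mul_comm, ← mul_assoc, mul_comm (Matrix.det (Matrix.map D C)), hdet, one_mul]

lemma charpoly_diagonal' {m R : Type*} [Fintype m] [DecidableEq m] [CommRing R] (d : m → R) :
    (diagonal d).charpoly = ∏ i, (X - C (d i)) := by
  have : charmatrix (diagonal d) = diagonal fun i => (X : R[X]) - C (d i) := by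
    ext i j
    by_cases h : i = j
    · subst h; simp [charmatrix_apply_eq]
    · simp [charmatrix_apply_ne _ _ _ h, diagonal_apply_ne _ h]
  rw [Matrix.charpoly, this, det_diagonal]

lemma herm_charpoly {m : Type*} [Fintype m] [DecidableEq m] (M : Matrix m m ℂ)
    (hM : M.IsHermitian) :
    M.charpoly = ∏ i, (X - C (hM.eigenvalues i : ℂ)) := by
  have hU : (hM.eigenvectorUnitary : Matrix m m ℂ) ∈ Matrix.unitaryGroup m ℂ :=
    hM.eigenvectorUnitary.2
  have h1 : (hM.eigenvectorUnitary : Matrix m m ℂ) *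
      star (hM.eigenvectorUnitary : Matrix m m ℂ) = 1 :=
    (Matrix.mem_unitaryGroup_iff).mp hU
  have hc := charpoly_conj (star (hM.eigenvectorUnitary : Matrix m m ℂ))
    (hM.eigenvectorUnitary : Matrix m m ℂ)
    (diagonal (RCLike.ofReal ∘ hM.eigenvalues)) h1
  rw [← (show M = (hM.eigenvectorUnitary : Matrix m m ℂ) * diagonal (RCLike.ofReal ∘ hM.eigenvalues) * star (hM.eigenvectorUnitary : Matrix m m ℂ) from hM.spectral_theorem)] at hc
  rw [hc, charpoly_diagonal']
  rfl

lemma herm_pow {m : Type*} [Fintype m] [DecidableEq m] (M : Matrix m m ℂ)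
    (hM : M.IsHermitian) (h : ℕ) :
    (M ^ h).trace = ∑ i, (hM.eigenvalues i : ℂ) ^ h := by
  have hU : (hM.eigenvectorUnitary : Matrix m m ℂ) ∈ Matrix.unitaryGroup m ℂ :=
    hM.eigenvectorUnitary.2
  have h1 : (hM.eigenvectorUnitary : Matrix m m ℂ) *
      star (hM.eigenvectorUnitary : Matrix m m ℂ) = 1 :=
    (Matrix.mem_unitaryGroup_iff).mp hU
  have h2 : star (hM.eigenvectorUnitary : Matrix m m ℂ) *
      (hM.eigenvectorUnitary : Matrix m m ℂ) = 1 :=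
    (Matrix.mem_unitaryGroup_iff').mp hU
  set U := (hM.eigenvectorUnitary : Matrix m m ℂ)
  set d : m → ℂ := fun i => (hM.eigenvalues i : ℂ)
  have hpow : M ^ h = U * diagonal d ^ h * star U := by
    induction h with
    | zero => simp [h1]
    | succ t ih =>
      have hDiag : diagonal (RCLike.ofReal ∘ hM.eigenvalues) = diagonal d := rfl
      rw [pow_succ, ih, pow_succ, (show M = U * diagonal (RCLike.ofReal ∘ hM.eigenvalues) * star U from hM.spectral_theorem), hDiag]
      rw [show U * diagonal d ^ t * star U * (U * diagonal d * star U)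
            = U * diagonal d ^ t * (star U * U) * diagonal d * star U by
          simp only [mul_assoc]]
      rw [h2]
      simp only [mul_assoc, one_mul]
  rw [hpow, Matrix.trace_mul_cycle, h2, one_mul, diagonal_pow, trace_diagonal]
  simp [d]

lemma trace_pow_of_charpoly {m l : Type*} [Fintype m] [DecidableEq m] [Fintype l] [DecidableEq l]
    (M : Matrix m m ℂ) (hM : M.IsHermitian) (N : Matrix l l ℂ) (hN : N.IsHermitian) (k : ℕ)
    (hcp : M.charpoly = N.charpoly ^ k) (h : ℕ) :
    (M ^ h).trace = (k : ℂ) * (N ^ h).trace := by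
  set s : Multiset ℂ := Finset.univ.val.map fun i => (hM.eigenvalues i : ℂ) with hs
  set t : Multiset ℂ := Finset.univ.val.map fun i => (hN.eigenvalues i : ℂ) with ht
  have hMs : M.charpoly = (s.map fun a => X - C a).prod := by
    rw [herm_charpoly M hM, Finset.prod_eq_multiset_prod, hs, Multiset.map_map]
    rfl
  have hNt : N.charpoly = (t.map fun a => X - C a).prod := by
    rw [herm_charpoly N hN, Finset.prod_eq_multiset_prod, ht, Multiset.map_map]
    rfl
  have hroots : s = k • t := by
    have := congrArg Polynomial.roots hcp
    rwa [hMs, hNt, Polynomial.roots_pow, Polynomial.roots_multiset_prod_X_sub_C,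
      Polynomial.roots_multiset_prod_X_sub_C] at this
  have hMtr : (M ^ h).trace = (s.map fun a => a ^ h).sum := by
    rw [herm_pow M hM h, Finset.sum_eq_multiset_sum, hs, Multiset.map_map]; rfl
  have hNtr : (N ^ h).trace = (t.map fun a => a ^ h).sum := by
    rw [herm_pow N hN h, Finset.sum_eq_multiset_sum, ht, Multiset.map_map]; rfl
  rw [hMtr, hNtr, hroots, Multiset.map_nsmul, Multiset.sum_nsmul, nsmul_eq_mul]

open scoped Kronecker in
lemma charmatrix_kron_one {R : Type*} [CommRing R] {n k : ℕ} (A : Matrix (Fin n) (Fin n) R) :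
    charmatrix (A ⊗ₖ (1 : Matrix (Fin k) (Fin k) R))
      = charmatrix A ⊗ₖ (1 : Matrix (Fin k) (Fin k) R[X]) := by
  ext ⟨i, a⟩ ⟨j, b⟩
  rw [charmatrix_apply]
  simp only [kroneckerMap_apply, one_apply, diagonal_apply, charmatrix_apply, Prod.mk.injEq]
  by_cases hab : a = b <;> by_cases hij : i = j <;>
    simp [hab, hij, mul_ite, smul_eq_mul, Matrix.one_apply]

open scoped Kronecker in
lemma charpoly_kron_one {R : Type*} [CommRing R] {n k : ℕ} (A : Matrix (Fin n) (Fin n) R) :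
    (A ⊗ₖ (1 : Matrix (Fin k) (Fin k) R)).charpoly = A.charpoly ^ k := by
  rw [Matrix.charpoly, charmatrix_kron_one, Matrix.det_kronecker, det_one, one_pow,
    Fintype.card_fin, mul_one]
  rfl

end Helpers


section GraphLemmas

variable {n k : ℕ}

lemma walkGain_cons {Γ : SimpleGraph (Fin n)} (Ψ : Fin n → Fin n → G) {u v w : Fin n}
    (h : Γ.Adj u v) (p : Γ.Walk v w) :
    walkGain Ψ (SimpleGraph.Walk.cons h p) = Ψ u v * walkGain Ψ p := by
  simp [walkGain]

lemma walkGain_nil {Γ : SimpleGraph (Fin n)} (Ψ : Fin n → Fin n → G) {u : Fin n} :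
    walkGain Ψ (SimpleGraph.Walk.nil : Γ.Walk u u) = 1 := rfl

lemma walkGain_append {Γ : SimpleGraph (Fin n)} (Ψ : Fin n → Fin n → G) {u v w : Fin n}
    (p : Γ.Walk u v) (q : Γ.Walk v w) :
    walkGain Ψ (p.append q) = walkGain Ψ p * walkGain Ψ q := by
  simp [walkGain, SimpleGraph.Walk.darts_append]

lemma walkGain_copy {Γ : SimpleGraph (Fin n)} (Ψ : Fin n → Fin n → G) {u v u' v' : Fin n}
    (p : Γ.Walk u v) (hu : u = u') (hv : v = v') :
    walkGain Ψ (p.copy hu hv) = walkGain Ψ p := by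
  subst hu; subst hv; rfl

lemma walkGain_reverse {Γ : SimpleGraph (Fin n)} {Ψ : Fin n → Fin n → G} (hΨ : IsGain Γ Ψ)
    {u v : Fin n} (p : Γ.Walk u v) :
    walkGain Ψ p.reverse = (walkGain Ψ p)⁻¹ := by
  induction p with
  | nil => simp [walkGain]
  | cons h p ih =>
    rw [SimpleGraph.Walk.reverse_cons, walkGain_append, ih, walkGain_cons, walkGain_cons,
      hΨ _ _ h, walkGain_nil, mul_one, _root_.mul_inv_rev]

/-- The represented adjacency matrix, written explicitly. -/
def bmat (Γ : SimpleGraph (Fin n)) [DecidableRel Γ.Adj] (Ψ : Fin n → Fin n → G)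
    (π : G → Matrix (Fin k) (Fin k) ℂ) : Matrix (Fin n × Fin k) (Fin n × Fin k) ℂ :=
  Matrix.of fun p q => if Γ.Adj p.1 q.1 then π (Ψ p.1 q.1) p.2 q.2 else 0

lemma fourierM_gainAdj (Γ : SimpleGraph (Fin n)) [DecidableRel Γ.Adj]
    (Ψ : Fin n → Fin n → G) (π : G → Matrix (Fin k) (Fin k) ℂ) :
    fourierM (gainAdj Γ Ψ) π = bmat Γ Ψ π := by
  classical
  ext ⟨i, a⟩ ⟨j, b⟩
  rw [fourierM, Matrix.sum_apply]
  by_cases hadj : Γ.Adj i j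
  · have hmem : Ψ i j ∈ matSupport (gainAdj Γ Ψ) := by
      rw [matSupport]
      rw [Finset.mem_biUnion]
      refine ⟨i, Finset.mem_univ _, ?_⟩
      rw [Finset.mem_biUnion]
      refine ⟨j, Finset.mem_univ _, ?_⟩
      rw [Finsupp.mem_support_iff]
      simp [gainAdj, hadj, MonoidAlgebra.single_apply, MonoidAlgebra.coeff_single, Finsupp.single_apply]
    have : ∀ x ∈ matSupport (gainAdj Γ Ψ),
        (matCoeff (gainAdj Γ Ψ) x ⊗ₖ π x) (i, a) (j, b)
          = if Ψ i j = x then π x a b else 0 := by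
      intro x _
      rw [kroneckerMap_apply]
      simp only [matCoeff, Matrix.of_apply, gainAdj, hadj, if_pos hadj,
        MonoidAlgebra.single_apply, MonoidAlgebra.coeff_single, Finsupp.single_apply]
      by_cases hx : Ψ i j = x <;> simp [hx]
    rw [Finset.sum_congr rfl this, Finset.sum_ite_eq _ (Ψ i j) (fun x => π x a b), if_pos hmem]
    simp [bmat, hadj]
  · have : ∀ x ∈ matSupport (gainAdj Γ Ψ),
        (matCoeff (gainAdj Γ Ψ) x ⊗ₖ π x) (i, a) (j, b) = 0 := by
      intro x _
      rw [kroneckerMap_apply]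
      simp [matCoeff, gainAdj, hadj]
    rw [Finset.sum_congr rfl this, Finset.sum_const_zero]
    simp [bmat, hadj]

lemma bmat_hermitian (Γ : SimpleGraph (Fin n)) [DecidableRel Γ.Adj]
    {Ψ : Fin n → Fin n → G} (hΨ : IsGain Γ Ψ) (π : G →* Matrix (Fin k) (Fin k) ℂ)
    (hU : IsUnitaryRep π) : (bmat Γ Ψ ⇑π).IsHermitian := by
  have key : ∀ g : G, π g⁻¹ = star (π g) := by
    intro g
    have hmem := hU g
    rw [Matrix.mem_unitaryGroup_iff] at hmem
    calc π g⁻¹ = π g⁻¹ * (π g * star (π g)) := by rw [hmem, mul_one]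
      _ = star (π g) := by rw [← mul_assoc, ← MonoidHom.map_mul, inv_mul_cancel, MonoidHom.map_one, one_mul]
  ext ⟨i, a⟩ ⟨j, b⟩
  rw [Matrix.conjTranspose_apply]
  show star (bmat Γ Ψ ⇑π (j, b) (i, a)) = bmat Γ Ψ ⇑π (i, a) (j, b)
  simp only [bmat, Matrix.of_apply]
  by_cases hadj : Γ.Adj i j
  · rw [if_pos hadj.symm, if_pos hadj, hΨ _ _ hadj.symm]
    rw [key, Matrix.star_apply]
  · rw [if_neg (fun hc => hadj hc.symm), if_neg hadj, star_zero]

lemma bmat_pow_apply (Γ : SimpleGraph (Fin n)) [DecidableRel Γ.Adj]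
    (Ψ : Fin n → Fin n → G) (π : G →* Matrix (Fin k) (Fin k) ℂ) (h : ℕ) :
    ∀ (i j : Fin n) (a b : Fin k),
      ((bmat Γ Ψ ⇑π) ^ h) (i, a) (j, b)
        = ∑ p ∈ Γ.finsetWalkLength h i j, π (walkGain Ψ p) a b := by
  induction h with
  | zero =>
    intro i j a b
    by_cases hij : i = j
    · subst hij
      rw [pow_zero]
      have : Γ.finsetWalkLength 0 i i = {SimpleGraph.Walk.nil} := by
        simp [SimpleGraph.finsetWalkLength]
      rw [this, Finset.sum_singleton, walkGain_nil, MonoidHom.map_one, Matrix.one_apply, Matrix.one_apply]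
      simp [Prod.ext_iff]
    · have : Γ.finsetWalkLength 0 i j = ∅ := by
        simp [SimpleGraph.finsetWalkLength, hij]
      rw [pow_zero, this, Finset.sum_empty, Matrix.one_apply_ne]
      simp [Prod.ext_iff, hij]
  | succ t ih =>
    intro i j a b
    rw [pow_succ', Matrix.mul_apply, Fintype.sum_prod_type]
    have lhs_eq : ∀ l : Fin n,
        ∑ c : Fin k, (bmat Γ Ψ ⇑π) (i, a) (l, c) * ((bmat Γ Ψ ⇑π) ^ t) (l, c) (j, b)
          = if Γ.Adj i l then
              ∑ p ∈ Γ.finsetWalkLength t l j, π (Ψ i l * walkGain Ψ p) a b else 0 := by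
      intro l
      by_cases hadj : Γ.Adj i l
      · rw [if_pos hadj]
        have : ∀ c : Fin k, (bmat Γ Ψ ⇑π) (i, a) (l, c) * ((bmat Γ Ψ ⇑π) ^ t) (l, c) (j, b)
            = ∑ p ∈ Γ.finsetWalkLength t l j, π (Ψ i l) a c * π (walkGain Ψ p) c b := by
          intro c
          rw [ih l j c b, Finset.mul_sum]
          simp [bmat, hadj]
        rw [Finset.sum_congr rfl (fun c _ => this c), Finset.sum_comm]
        refine Finset.sum_congr rfl fun p _ => ?_
        rw [MonoidHom.map_mul, Matrix.mul_apply]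
      · rw [if_neg hadj]
        refine Finset.sum_eq_zero fun c _ => ?_
        simp [bmat, hadj]
    rw [Finset.sum_congr rfl (fun l _ => lhs_eq l)]
    -- now the walk side
    rw [show Γ.finsetWalkLength (t+1) i j
        = Finset.univ.biUnion fun (w : Γ.neighborSet i) =>
            (Γ.finsetWalkLength t w j).map
              ⟨fun p => SimpleGraph.Walk.cons w.property p, fun _ _ h => by cases h; rfl⟩ from rfl]
    rw [Finset.sum_biUnion ?hdisj]
    case hdisj =>
      rintro ⟨x, hx⟩ - ⟨y, hy⟩ - hxy
      simp only [Function.onFun]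
      rw [_root_.disjoint_iff_inf_le]
      intro p hp
      simp only [Finset.inf_eq_inter, Finset.mem_inter, Finset.mem_map,
        Function.Embedding.coeFn_mk] at hp
      obtain ⟨⟨px, _, rfl⟩, ⟨py, hpy, hp⟩⟩ := hp
      cases hp
      simp at hxy
    have rhs_eq : ∀ w : Γ.neighborSet i,
        ∑ p ∈ (Γ.finsetWalkLength t (w : Fin n) j).map
            ⟨fun p => SimpleGraph.Walk.cons w.property p, fun _ _ h => by cases h; rfl⟩,
          π (walkGain Ψ p) a b
        = ∑ p ∈ Γ.finsetWalkLength t (w : Fin n) j, π (Ψ i w * walkGain Ψ p) a b := by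
      intro w
      rw [Finset.sum_map]
      refine Finset.sum_congr rfl fun p _ => ?_
      exact congrArg (fun g => π g a b) (walkGain_cons Ψ w.property p)
    rw [Finset.sum_congr rfl (fun w _ => rhs_eq w)]
    -- convert subtype sum to ite sum
    rw [← Finset.sum_subtype (Γ.neighborFinset i)
      (fun x => by simp)
      (fun l => ∑ p ∈ Γ.finsetWalkLength t l j, π (Ψ i l * walkGain Ψ p) a b)]
    rw [SimpleGraph.neighborFinset_eq_filter, Finset.sum_filter]

lemma bmat_trace_pow (Γ : SimpleGraph (Fin n)) [DecidableRel Γ.Adj]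
    (Ψ : Fin n → Fin n → G) (π : G →* Matrix (Fin k) (Fin k) ℂ) (h : ℕ) :
    ((bmat Γ Ψ ⇑π) ^ h).trace
      = ∑ i, ∑ p ∈ Γ.finsetWalkLength h i i, (π (walkGain Ψ p)).trace := by
  simp only [Matrix.trace, Matrix.diag]
  rw [Fintype.sum_prod_type]
  refine Finset.sum_congr rfl fun i _ => ?_
  rw [Finset.sum_congr rfl (fun a _ => bmat_pow_apply Γ Ψ π h i i a a), Finset.sum_comm]

lemma adj_trace_pow (Γ : SimpleGraph (Fin n)) [DecidableRel Γ.Adj] (h : ℕ) :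
    ((Γ.adjMatrix ℂ) ^ h).trace = ∑ i, ((Γ.finsetWalkLength h i i).card : ℂ) := by
  classical
  simp only [Matrix.trace, Matrix.diag]
  refine Finset.sum_congr rfl fun i _ => ?_
  rw [SimpleGraph.adjMatrix_pow_apply_eq_card_walk, SimpleGraph.card_set_walk_length_eq]

lemma unitary_col (U : Matrix (Fin k) (Fin k) ℂ) (hU : U ∈ Matrix.unitaryGroup (Fin k) ℂ)
    (a : Fin k) : ∑ b, Complex.normSq (U b a) = 1 := by
  have h2 : star U * U = 1 := (Matrix.mem_unitaryGroup_iff').mp hU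
  have := congrArg (fun M : Matrix (Fin k) (Fin k) ℂ => M a a) h2
  simp only [Matrix.mul_apply, Matrix.one_apply_eq, Matrix.star_apply] at this
  have : (∑ b, (Complex.normSq (U b a) : ℂ)) = 1 := by
    rw [← this]
    refine Finset.sum_congr rfl fun b _ => ?_
    rw [show star (U b a) * U b a = (starRingEnd ℂ) (U b a) * U b a from rfl,
      ← Complex.normSq_eq_conj_mul_self]
  have := congrArg Complex.re this
  simpa [Complex.re_sum] using this

lemma unitary_diag_re_le (U : Matrix (Fin k) (Fin k) ℂ)
    (hU : U ∈ Matrix.unitaryGroup (Fin k) ℂ) (a : Fin k) : (U a a).re ≤ 1 := by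
  have hsum := unitary_col U hU a
  have hterm : Complex.normSq (U a a) ≤ 1 := by
    have := Finset.single_le_sum (f := fun b => Complex.normSq (U b a))
      (fun b _ => Complex.normSq_nonneg _) (Finset.mem_univ a)
    linarith
  have hns := Complex.normSq_apply (U a a)
  nlinarith [sq_nonneg ((U a a).re - 1), sq_nonneg ((U a a).im)]

lemma unitary_re_trace_le (U : Matrix (Fin k) (Fin k) ℂ)
    (hU : U ∈ Matrix.unitaryGroup (Fin k) ℂ) : (U.trace).re ≤ (k : ℝ) := by
  have : (U.trace).re = ∑ a, (U a a).re := by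
    simp [Matrix.trace, Matrix.diag, Complex.re_sum]
  rw [this]
  calc ∑ a, (U a a).re ≤ ∑ _a : Fin k, (1 : ℝ) :=
        Finset.sum_le_sum fun a _ => unitary_diag_re_le U hU a
    _ = (k : ℝ) := by simp

lemma unitary_eq_one_of_re_trace (U : Matrix (Fin k) (Fin k) ℂ)
    (hU : U ∈ Matrix.unitaryGroup (Fin k) ℂ) (htr : (U.trace).re = (k : ℝ)) : U = 1 := by
  have hretr : ∑ a, (U a a).re = (k : ℝ) := by
    rw [← htr]; simp [Matrix.trace, Matrix.diag, Complex.re_sum]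
  have hzero : ∑ a : Fin k, (1 - (U a a).re) = 0 := by
    rw [Finset.sum_sub_distrib, hretr]; simp
  have hdiag_re : ∀ a : Fin k, (U a a).re = 1 := by
    intro a
    have := (Finset.sum_eq_zero_iff_of_nonneg
      (fun a _ => by linarith [unitary_diag_re_le U hU a])).mp hzero a (Finset.mem_univ a)
    linarith
  have hdiag : ∀ a : Fin k, U a a = 1 := by
    intro a
    have hsum := unitary_col U hU a
    have hterm : Complex.normSq (U a a) ≤ 1 := by
      have := Finset.single_le_sum (f := fun b => Complex.normSq (U b a))
        (fun b _ => Complex.normSq_nonneg _) (Finset.mem_univ a)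
      linarith
    have hns := Complex.normSq_apply (U a a)
    have him : (U a a).im = 0 := by nlinarith [hdiag_re a, sq_nonneg ((U a a).im)]
    exact Complex.ext (by rw [hdiag_re a]; rfl) (by rw [him]; rfl)
  ext b a
  by_cases hba : b = a
  · subst hba; rw [hdiag b, Matrix.one_apply_eq]
  · have hsum := unitary_col U hU a
    have hsplit : Complex.normSq (U a a) + ∑ c ∈ Finset.univ.erase a, Complex.normSq (U c a) = 1 := by
      rw [Finset.add_sum_erase _ (fun c => Complex.normSq (U c a)) (Finset.mem_univ a)]
      exact hsum
    rw [hdiag a] at hsplit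
    simp only [Complex.normSq_one] at hsplit
    have hrest : ∑ c ∈ Finset.univ.erase a, Complex.normSq (U c a) = 0 := by linarith
    have := (Finset.sum_eq_zero_iff_of_nonneg
      (fun c _ => Complex.normSq_nonneg _)).mp hrest b (Finset.mem_erase.mpr ⟨hba, Finset.mem_univ b⟩)
    rw [Matrix.one_apply_ne hba]
    exact Complex.normSq_eq_zero.mp this

end GraphLemmas

/-- for a faithful unitary representation of degree k, balance is
equivalent to the spectrum of `A_π` being k copies of the spectrum of `A⁺`. -/
theorem statement11 {G : Type*} [Group G] {n k : ℕ} (Γ : SimpleGraph (Fin n))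
    [DecidableRel Γ.Adj] (Ψ : Fin n → Fin n → G) (hΨ : IsGain Γ Ψ)
    (π : G →* Matrix (Fin k) (Fin k) ℂ) (hU : IsUnitaryRep π)
    (hfaith : Function.Injective ⇑π) :
    IsBalanced Γ Ψ ↔
      (fourierM (gainAdj Γ Ψ) ⇑π).charpoly = (Γ.adjMatrix ℂ).charpoly ^ k := by
  classical
  rw [fourierM_gainAdj]
  constructor
  · -- balanced → spectrum is k copies
    intro hbal
    have hrep : ∀ v : Fin n, Γ.Reachable ((Γ.connectedComponentMk v).out) v := by
      intro v
      exact SimpleGraph.ConnectedComponent.exact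
        (show Γ.connectedComponentMk _ = _ from Quot.out_eq _)
    set θ : Fin n → G := fun v => walkGain Ψ (hrep v).some with hθdef
    have hθ : ∀ i j, Γ.Adj i j → Ψ i j = (θ i)⁻¹ * θ j := by
      intro i j hadj
      have hcomp : (Γ.connectedComponentMk j).out = (Γ.connectedComponentMk i).out := by
        rw [SimpleGraph.ConnectedComponent.sound hadj.reachable]
      set q : Γ.Walk ((Γ.connectedComponentMk i).out) ((Γ.connectedComponentMk i).out) :=
        ((hrep i).some.append (SimpleGraph.Walk.cons hadj SimpleGraph.Walk.nil)).append
          (((hrep j).some.copy hcomp rfl).reverse) with hq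
      have hbq := hbal _ q
      rw [hq, walkGain_append, walkGain_append, walkGain_cons, walkGain_nil,
        walkGain_reverse hΨ, walkGain_copy] at hbq
      have h0 : θ i * (Ψ i j * 1) * (θ j)⁻¹ = 1 := hbq
      rw [mul_one] at h0
      have h2 : θ i * Ψ i j = θ j := by
        have := mul_eq_one_iff_eq_inv.mp h0
        rwa [inv_inv] at this
      rw [← h2, ← mul_assoc, inv_mul_cancel, one_mul]
    set A := Γ.adjMatrix ℂ with hA
    set D : Matrix (Fin n × Fin k) (Fin n × Fin k) ℂ :=
      Matrix.of fun p q => if p.1 = q.1 then π (θ p.1) p.2 q.2 else 0 with hD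
    set D' : Matrix (Fin n × Fin k) (Fin n × Fin k) ℂ :=
      Matrix.of fun p q => if p.1 = q.1 then π ((θ p.1))⁻¹ p.2 q.2 else 0 with hD'
    have h1 : D' * D = 1 := by
      ext ⟨i, a⟩ ⟨j, b⟩
      rw [Matrix.mul_apply, Fintype.sum_prod_type]
      rw [Finset.sum_eq_single i ?h1 ?h2]
      case h1 =>
        intro l _ hl
        refine Finset.sum_eq_zero fun c _ => ?_
        have : D' (i, a) (l, c) = 0 := by simp [D', Ne.symm hl]
        rw [this, zero_mul]
      case h2 => intro hi; exact absurd (Finset.mem_univ i) hi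
      by_cases hij : i = j
      · subst hij
        have hterm : ∀ c, D' (i, a) (i, c) * D (i, c) (i, b)
            = π (θ i)⁻¹ a c * π (θ i) c b := by
          intro c; simp [D, D']
        rw [Finset.sum_congr rfl (fun c _ => hterm c), ← Matrix.mul_apply,
          ← MonoidHom.map_mul, inv_mul_cancel, MonoidHom.map_one]
        simp [Matrix.one_apply, Prod.ext_iff]
      · have hterm : ∀ c, D' (i, a) (i, c) * D (i, c) (j, b) = 0 := by
          intro c
          have : D (i, c) (j, b) = 0 := by simp [D, hij]
          rw [this, mul_zero]
        rw [Finset.sum_congr rfl (fun c _ => hterm c), Finset.sum_const_zero,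
          Matrix.one_apply_ne (by simp [Prod.ext_iff, hij])]
    have hBD : bmat Γ Ψ ⇑π = D' * (A ⊗ₖ (1 : Matrix (Fin k) (Fin k) ℂ)) * D := by
      have inner : ∀ (i j : Fin n) (c b : Fin k),
          ((A ⊗ₖ (1 : Matrix (Fin k) (Fin k) ℂ)) * D) (i, c) (j, b)
            = A i j * π (θ j) c b := by
        intro i j c b
        rw [Matrix.mul_apply, Fintype.sum_prod_type]
        rw [Finset.sum_eq_single j ?g3 ?g4]
        case g3 =>
          intro l _ hl
          refine Finset.sum_eq_zero fun e _ => ?_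
          have : D (l, e) (j, b) = 0 := by simp [D, hl]
          rw [this, mul_zero]
        case g4 => intro hj; exact absurd (Finset.mem_univ j) hj
        rw [Finset.sum_eq_single c ?g5 ?g6]
        case g5 =>
          intro e _ he
          have : (A ⊗ₖ (1 : Matrix (Fin k) (Fin k) ℂ)) (i, c) (j, e) = 0 := by
            simp [Matrix.one_apply, Ne.symm he]
          rw [this, zero_mul]
        case g6 => intro hc; exact absurd (Finset.mem_univ c) hc
        have e1 : (A ⊗ₖ (1 : Matrix (Fin k) (Fin k) ℂ)) (i, c) (j, c) = A i j := by
          simp [Matrix.one_apply]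
        have e2 : D (j, c) (j, b) = π (θ j) c b := by simp [D]
        rw [e1, e2]
      ext ⟨i, a⟩ ⟨j, b⟩
      rw [mul_assoc, Matrix.mul_apply, Fintype.sum_prod_type]
      rw [Finset.sum_eq_single i ?g1 ?g2]
      case g1 =>
        intro l _ hl
        refine Finset.sum_eq_zero fun c _ => ?_
        have : D' (i, a) (l, c) = 0 := by simp [D', Ne.symm hl]
        rw [this, zero_mul]
      case g2 => intro hi; exact absurd (Finset.mem_univ i) hi
      have hterm : ∀ c, D' (i, a) (i, c) * ((A ⊗ₖ (1 : Matrix (Fin k) (Fin k) ℂ)) * D) (i, c) (j, b)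
          = A i j * (π (θ i)⁻¹ a c * π (θ j) c b) := by
        intro c
        rw [inner i j c b]
        have : D' (i, a) (i, c) = π (θ i)⁻¹ a c := by simp [D']
        rw [this]; ring
      rw [Finset.sum_congr rfl (fun c _ => hterm c), ← Finset.mul_sum]
      by_cases hadj : Γ.Adj i j
      · have hb : bmat Γ Ψ ⇑π (i, a) (j, b) = π (Ψ i j) a b := by simp [bmat, hadj]
        rw [hb, hθ i j hadj, MonoidHom.map_mul, Matrix.mul_apply]
        have hAij : A i j = 1 := by simp [A, hadj]
        rw [hAij, one_mul]
      · have hAij : A i j = 0 := by simp [A, hadj]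
        have hb : bmat Γ Ψ ⇑π (i, a) (j, b) = 0 := by simp [bmat, hadj]
        rw [hb, hAij, zero_mul]
    rw [hBD, charpoly_conj _ _ _ h1, charpoly_kron_one]
  · -- spectrum k copies → balanced
    intro hcp
    have hA_herm : (Γ.adjMatrix ℂ).IsHermitian := by
      ext i j
      rw [Matrix.conjTranspose_apply]
      by_cases hadj : Γ.Adj j i
      · rw [SimpleGraph.adjMatrix_apply, SimpleGraph.adjMatrix_apply, if_pos hadj,
          if_pos hadj.symm, star_one]
      · rw [SimpleGraph.adjMatrix_apply, SimpleGraph.adjMatrix_apply, if_neg hadj,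
          if_neg (fun hc => hadj hc.symm), star_zero]
    have hB_herm := bmat_hermitian Γ hΨ π hU
    have htr : ∀ h : ℕ, ((bmat Γ Ψ ⇑π) ^ h).trace = (k : ℂ) * ((Γ.adjMatrix ℂ) ^ h).trace :=
      fun h => trace_pow_of_charpoly _ hB_herm _ hA_herm k hcp h
    intro v p
    set h := p.length with hh
    have hEq : ∑ i, ∑ q ∈ Γ.finsetWalkLength h i i, (π (walkGain Ψ q)).trace
        = (k : ℂ) * ∑ i, ((Γ.finsetWalkLength h i i).card : ℂ) := by
      rw [← bmat_trace_pow, ← adj_trace_pow]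
      exact htr h
    have hre : ∑ i, ∑ q ∈ Γ.finsetWalkLength h i i, ((π (walkGain Ψ q)).trace).re
        = ∑ i, ((k : ℝ) * ((Γ.finsetWalkLength h i i).card : ℝ)) := by
      have h2 : ((∑ i, ∑ q ∈ Γ.finsetWalkLength h i i, (π (walkGain Ψ q)).trace) : ℂ).re
          = ((k : ℂ) * ∑ i, ((Γ.finsetWalkLength h i i).card : ℂ)).re := by rw [hEq]
      rw [Complex.re_sum] at h2
      rw [Finset.sum_congr rfl (fun i _ => Complex.re_sum (Γ.finsetWalkLength h i i)
        (fun q => (π (walkGain Ψ q)).trace))] at h2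
      rw [h2]
      have : ((k : ℂ) * ∑ i, ((Γ.finsetWalkLength h i i).card : ℂ))
          = (((∑ i, ((k : ℝ) * ((Γ.finsetWalkLength h i i).card : ℝ))) : ℝ) : ℂ) := by
        push_cast
        rw [Finset.mul_sum]
      rw [this, Complex.ofReal_re]
    have hzero : ∑ i, ∑ q ∈ Γ.finsetWalkLength h i i,
        ((k : ℝ) - ((π (walkGain Ψ q)).trace).re) = 0 := by
      have expand : ∀ i : Fin n, ∑ q ∈ Γ.finsetWalkLength h i i,
          ((k : ℝ) - ((π (walkGain Ψ q)).trace).re)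
          = (k : ℝ) * ((Γ.finsetWalkLength h i i).card : ℝ)
            - ∑ q ∈ Γ.finsetWalkLength h i i, ((π (walkGain Ψ q)).trace).re := by
        intro i
        rw [Finset.sum_sub_distrib, Finset.sum_const, nsmul_eq_mul, mul_comm]
      rw [Finset.sum_congr rfl (fun i _ => expand i), Finset.sum_sub_distrib, hre, sub_self]
    have hnonneg : ∀ (i : Fin n), ∀ q ∈ Γ.finsetWalkLength h i i,
        (0:ℝ) ≤ (k : ℝ) - ((π (walkGain Ψ q)).trace).re := by
      intro i q _
      have := unitary_re_trace_le (π (walkGain Ψ q)) (hU _)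
      linarith
    have houter := (Finset.sum_eq_zero_iff_of_nonneg
      (fun i _ => Finset.sum_nonneg (hnonneg i))).mp hzero
    have hinner := (Finset.sum_eq_zero_iff_of_nonneg
      (fun q hq => hnonneg v q hq)).mp (houter v (Finset.mem_univ v))
    have hpmem : p ∈ Γ.finsetWalkLength h v v := by
      rw [SimpleGraph.mem_finsetWalkLength_iff]
    have hterm := hinner p hpmem
    have htrace_re : ((π (walkGain Ψ p)).trace).re = (k : ℝ) := by linarith
    have hone : π (walkGain Ψ p) = 1 :=
      unitary_eq_one_of_re_trace _ (hU _) htrace_re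
    exact hfaith (by rw [hone, MonoidHom.map_one])

end GainPaper
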